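/- Let n ≥ 2 and let S₃ : ℝ → Matrix (Fin (2n-2)) (Fin (2n-2)) ℝ be differentiable, symmetric-valued, satisfying (in the Loewner order) S₃'(t) - U S₃(t) - S₃(t) Uᵀ + R(t) + E + M(t) + S₃(t)² ≤ 0, where U is skew-symmetric, R(t) is symmetric with trace ≥ 0, E = (b²/4)·I, and M(t) is positive semidefinite. Then s₃(t) := trace(S₃(t)) satisfies s₃'(t) + s₃(t)²/(2n-2) ≤ 0. -/

import Mathlib

open Matrix

lemma psd_trace_nonneg {m : Type*} [Fintype m] [DecidableEq m]
    {A : Matrix m m ℝ} (hA : A.PosSemidef) : 0 ≤ A.trace := by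
  apply Finset.sum_nonneg
  intro i _
  have h := hA.2 (Finsupp.single i 1)
  simpa [dotProduct, Matrix.mulVec, Pi.single_apply, Finsupp.sum_single_index, Finset.sum_ite_eq,
    mul_comm] using h

theorem trace_riccati_inequality (n : ℕ) (hn : 2 ≤ n) (b : ℝ)
    (S₃ S₃' R M : ℝ → Matrix (Fin (2 * n - 2)) (Fin (2 * n - 2)) ℝ)
    (U E : Matrix (Fin (2 * n - 2)) (Fin (2 * n - 2)) ℝ)
    (hderiv : ∀ t i j, HasDerivAt (fun s => S₃ s i j) (S₃' t i j) t)
    (hsymm : ∀ t, (S₃ t).IsSymm)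
    (hU : Uᵀ = -U)
    (hR : ∀ t, (R t).IsSymm ∧ 0 ≤ (R t).trace)
    (hE : E = (b ^ 2 / 4) • (1 : Matrix (Fin (2 * n - 2)) (Fin (2 * n - 2)) ℝ))
    (hM : ∀ t, (M t).PosSemidef)
    (hineq : ∀ t,
      (-(S₃' t - U * S₃ t - S₃ t * Uᵀ + R t + E + M t + S₃ t * S₃ t)).PosSemidef) :
    ∀ t, (S₃' t).trace + (S₃ t).trace ^ 2 / (2 * (n : ℝ) - 2) ≤ 0 := by
  intro t
  have hd : ((2 * n - 2 : ℕ) : ℝ) = 2 * (n : ℝ) - 2 := by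
    have h2 : 2 ≤ 2 * n := by omega
    push_cast [Nat.cast_sub h2]
    ring
  have hn2 : (2 : ℝ) ≤ (n : ℝ) := by exact_mod_cast hn
  have hdpos : (0 : ℝ) < 2 * (n : ℝ) - 2 := by linarith
  set S := S₃ t with hS
  -- trace of U*S + S*Uᵀ is zero
  have hUS : (U * S).trace + (S * Uᵀ).trace = 0 := by
    rw [hU, Matrix.trace_mul_comm S (-U)]
    simp
  -- Cauchy-Schwarz: trace(S)^2 / d ≤ trace(S*S)
  have hcard : (Fintype.card (Fin (2 * n - 2)) : ℝ) = 2 * (n : ℝ) - 2 := by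
    rw [Fintype.card_fin, hd]
  have htrone : (1 : Matrix (Fin (2 * n - 2)) (Fin (2 * n - 2)) ℝ).trace = 2 * (n : ℝ) - 2 := by
    rw [Matrix.trace_one, hcard]
  set c : ℝ := S.trace / (2 * (n : ℝ) - 2) with hc
  have hT : (0 : ℝ) ≤ ((S - c • 1)ᵀ * (S - c • 1)).trace := by
    have := psd_trace_nonneg (Matrix.posSemidef_conjTranspose_mul_self (S - c • 1))
    simpa [Matrix.conjTranspose_eq_transpose_of_trivial] using this
  have hST : Sᵀ = S := (hsymm t)
  have hexp : ((S - c • 1)ᵀ * (S - c • 1)).trace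
      = (S * S).trace - 2 * c * S.trace + c ^ 2 * (2 * (n : ℝ) - 2) := by
    rw [Matrix.transpose_sub, hST, Matrix.transpose_smul, Matrix.transpose_one]
    rw [Matrix.sub_mul, Matrix.mul_sub, Matrix.mul_sub]
    simp [Matrix.trace_sub, Matrix.trace_smul, htrone, Matrix.smul_mul, Matrix.mul_smul]
    ring
  have hcd : c * (2 * (n : ℝ) - 2) = S.trace := div_mul_cancel₀ _ (ne_of_gt hdpos)
  have hCS : S.trace ^ 2 / (2 * (n : ℝ) - 2) ≤ (S * S).trace := by
    rw [hexp] at hT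
    rw [div_le_iff₀ hdpos]
    nlinarith [mul_nonneg hdpos.le hT, hcd]
  -- main trace inequality
  have htr := psd_trace_nonneg (hineq t)
  rw [Matrix.trace_neg] at htr
  simp only [Matrix.trace_add, Matrix.trace_sub] at htr
  rw [← hS] at htr
  have hRt := (hR t).2
  have hMt := psd_trace_nonneg (hM t)
  have hEt : (0 : ℝ) ≤ E.trace := by
    rw [hE, Matrix.trace_smul, htrone]
    have : (0:ℝ) ≤ b ^ 2 / 4 := by positivity
    simp only [smul_eq_mul]
    nlinarith
  have : (S₃' t).trace + (S * S).trace ≤ 0 := by linarith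
  linarith [hCS]
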